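/- The Ackermann hierarchy is pointwise monotone in its ordinal index: for all ordinals α, β with 0 < β < ε₀ and 0 < α < ε₀, and all x ∈ ℕ, if β ≺_x α then A_α(x) ≥ A_β(x). -/

import Mathlib

open ONote Ordinal

/-- The Ackermann hierarchy `A_α` (meaningful for `0 < α`): `A_1(x) = 2x`,
`A_{α+1}(x) = A_α^[x](1)`, `A_λ(x) = A_{λ(x)}(x)`. -/
def Ack : ONote → ℕ → ℕ
  | o =>
    match fundamentalSequence o, fundamentalSequence_has_prop o with
    | Sum.inl none, _ => fun _ => 0
    | Sum.inl (some a), hp =>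
      have : a < o := by rw [lt_def, hp.1]; exact Order.lt_succ _
      if a = 0 then fun x => 2 * x else fun x => (Ack a)^[x] 1
    | Sum.inr f, hp => fun i =>
      have : f i < o := (hp.2.1 i).2.1
      Ack (f i) i
  termination_by o => o

/-- One step of the pointwise ordering at `x`: `β ≺ α+1` when `β = α`, and `λ(x) ≺ λ` for a
limit `λ` (standard fundamental sequences). -/
def ptStep (x : ℕ) (β α : ONote) : Prop :=
  fundamentalSequence α = Sum.inl (some β) ∨
    ∃ f, fundamentalSequence α = Sum.inr f ∧ β = f x

/-- The pointwise ordering `β ≺_x α`: transitive closure of `ptStep x`. -/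
def ptLt (x : ℕ) : ONote → ONote → Prop := Relation.TransGen (ptStep x)

theorem Ack_def {o : ONote} {x} (e : fundamentalSequence o = x) :
    Ack o =
      match (motive := (x : Option ONote ⊕ (ℕ → ONote)) → FundamentalSequenceProp o x → ℕ → ℕ)
        x, e ▸ fundamentalSequence_has_prop o with
      | Sum.inl none, _ => fun _ => 0
      | Sum.inl (some a), _ => if a = 0 then fun x => 2 * x else fun x => (Ack a)^[x] 1
      | Sum.inr f, _ => fun i => Ack (f i) i := by
  subst x
  rw [Ack]

theorem Ack_zero' (o : ONote) (h : fundamentalSequence o = Sum.inl none) :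
    Ack o = fun _ => 0 := by rw [Ack_def h]

theorem Ack_succ (o) {a} (h : fundamentalSequence o = Sum.inl (some a)) :
    Ack o = if a = 0 then fun x => 2 * x else fun x => (Ack a)^[x] 1 := by rw [Ack_def h]

theorem Ack_limit (o) {f} (h : fundamentalSequence o = Sum.inr f) :
    Ack o = fun i => Ack (f i) i := by rw [Ack_def h]

theorem fs_oadd_some {a m b b'} (h : fundamentalSequence b = Sum.inl (some b')) :
    fundamentalSequence (oadd a m b) = Sum.inl (some (oadd a m b')) := by
  rw [fundamentalSequence, h]

theorem fs_oadd_inr {a m b g} (h : fundamentalSequence b = Sum.inr g) :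
    fundamentalSequence (oadd a m b) = Sum.inr (fun i => oadd a m (g i)) := by
  rw [fundamentalSequence, h]

theorem tailStep {x b c} (a m) (h : ptStep x b c) : ptStep x (oadd a m b) (oadd a m c) := by
  rcases h with h | ⟨g, h, rfl⟩
  · exact Or.inl (fs_oadd_some h)
  · exact Or.inr ⟨_, fs_oadd_inr h, rfl⟩

theorem tailLift {x b c} (a m) (h : ptLt x b c) : ptLt x (oadd a m b) (oadd a m c) := by
  induction h with
  | single h => exact Relation.TransGen.single (tailStep a m h)
  | tail _ h ih => exact ih.tail (tailStep a m h)

theorem fs_oadd_zero (a : ONote) (m : ℕ+) :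
    fundamentalSequence (oadd a m 0) =
      match fundamentalSequence a, m.natPred with
      | Sum.inl none, 0 => Sum.inl (some zero)
      | Sum.inl none, m + 1 => Sum.inl (some (oadd zero m.succPNat zero))
      | Sum.inl (some a'), 0 => Sum.inr fun i => oadd a' i.succPNat zero
      | Sum.inl (some a'), m + 1 => Sum.inr fun i => oadd a m.succPNat (oadd a' i.succPNat zero)
      | Sum.inr f, 0 => Sum.inr fun i => oadd (f i) 1 zero
      | Sum.inr f, m + 1 => Sum.inr fun i => oadd a m.succPNat (oadd (f i) 1 zero) := by
  rw [fundamentalSequence]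
  rfl

theorem oadd_ne_zero {a m b} : oadd a m b ≠ 0 := fun h => by cases h

theorem fs_inr_ne_zero : ∀ (o : ONote) {f}, fundamentalSequence o = Sum.inr f → ∀ i, f i ≠ 0 := by
  intro o f h i
  match o with
  | ONote.zero => cases h
  | oadd a m b =>
    rw [fundamentalSequence] at h
    rcases e : fundamentalSequence b with (_ | b') | g <;> rw [e] at h
    · rcases e2 : fundamentalSequence a with (_ | a') | g2 <;> rw [e2] at h <;>
        rcases e3 : m.natPred with _ | m' <;> rw [e3] at h <;> cases h <;> exact oadd_ne_zero
    · cases h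
    · cases h; exact oadd_ne_zero

theorem zero_ptLt (x : ℕ) : ∀ (o : ONote), o ≠ 0 → ptLt x 0 o
  | o, ho => by
    rcases e : fundamentalSequence o with (_ | a) | f
    · have hp := fundamentalSequence_has_prop o
      rw [e] at hp
      exact absurd hp ho
    · have hp := fundamentalSequence_has_prop o
      rw [e] at hp
      have ha : a < o := by rw [lt_def, hp.1]; exact Order.lt_succ _
      by_cases h0 : a = 0
      · subst h0; exact Relation.TransGen.single (Or.inl e)
      · exact (zero_ptLt x a h0).tail (Or.inl e)
    · have hp := fundamentalSequence_has_prop o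
      rw [e] at hp
      have hfx : f x < o := (hp.2.1 x).2.1
      exact (zero_ptLt x (f x) (fs_inr_ne_zero o e x)).tail (Or.inr ⟨f, e, rfl⟩)
  termination_by o => o

theorem succ_mono (x : ℕ) (a : ONote) (k : ℕ) :
    ptLt x (oadd a k.succPNat 0) (oadd a (k + 1).succPNat 0) := by
  have hfs := fs_oadd_zero a (k + 1).succPNat
  rw [Nat.natPred_succPNat] at hfs
  rcases e : fundamentalSequence a with (_ | a') | g <;> rw [e] at hfs
  · have hp := fundamentalSequence_has_prop a
    rw [e] at hp
    subst hp
    exact Relation.TransGen.single (Or.inl hfs)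
  · exact ((tailLift a k.succPNat (zero_ptLt x _ oadd_ne_zero)).tail
      (Or.inr ⟨_, hfs, rfl⟩) : ptLt x _ _)
  · exact ((tailLift a k.succPNat (zero_ptLt x _ oadd_ne_zero)).tail
      (Or.inr ⟨_, hfs, rfl⟩) : ptLt x _ _)

/-- `ptLe`: reflexive closure. -/
theorem succ_mono_le (x : ℕ) (a : ONote) (k : ℕ) :
    Relation.ReflTransGen (ptStep x) (oadd a 1 0) (oadd a k.succPNat 0) := by
  induction k with
  | zero => exact Relation.ReflTransGen.refl
  | succ n ih => exact ih.trans (succ_mono x a n).to_reflTransGen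

theorem headStep {x : ℕ} {β γ : ONote} (h : ptStep x β γ) :
    ptLt x (oadd β 1 0) (oadd γ 1 0) := by
  have hfs := fs_oadd_zero γ 1
  rcases h with h | ⟨g, h, rfl⟩
  · rw [h] at hfs
    have hstep : ptStep x (oadd β x.succPNat 0) (oadd γ 1 0) := Or.inr ⟨_, hfs, rfl⟩
    exact Relation.TransGen.tail' (succ_mono_le x β x) hstep
  · rw [h] at hfs
    exact Relation.TransGen.single (Or.inr ⟨_, hfs, rfl⟩)

theorem headLift {x : ℕ} {β γ : ONote} (h : ptLt x β γ) :
    ptLt x (oadd β 1 0) (oadd γ 1 0) := by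
  induction h with
  | single h => exact headStep h
  | tail _ h ih => exact ih.trans (headStep h)

theorem bachmann (x : ℕ) : ∀ (o : ONote) {f}, fundamentalSequence o = Sum.inr f →
    ptLt x (f x) (f (x + 1)) := by
  intro o
  induction o with
  | zero => intro f h; cases h
  | oadd a m b iha ihb =>
    intro f h
    rw [fundamentalSequence] at h
    rcases e : fundamentalSequence b with (_ | b') | g <;> rw [e] at h
    · rcases e2 : fundamentalSequence a with (_ | a') | g2 <;> rw [e2] at h <;>
        rcases e3 : m.natPred with _ | m' <;> rw [e3] at h <;> cases h
      · exact succ_mono x a' x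
      · exact tailLift a m'.succPNat (succ_mono x a' x)
      · exact headLift (iha e2)
      · exact tailLift a m'.succPNat (headLift (iha e2))
    · cases h
    · cases h
      exact tailLift a m (ihb e)

theorem onote_pos_of_ne_zero {o : ONote} (h : o ≠ 0) : 0 < o := by
  cases o with
  | zero => exact absurd rfl h
  | oadd a m b => exact oadd_pos a m b

theorem ptStep_lt {x : ℕ} {β γ : ONote} (h : ptStep x β γ) : β < γ := by
  rcases h with e | ⟨f, e, rfl⟩ <;> have hp := fundamentalSequence_has_prop γ <;> rw [e] at hp
  · rw [lt_def, hp.1]; exact Order.lt_succ _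
  · exact (hp.2.1 x).2.1

theorem ptStep_nf {x : ℕ} {β γ : ONote} (h : ptStep x β γ) (hγ : γ.NF) : β.NF := by
  rcases h with e | ⟨f, e, rfl⟩ <;> have hp := fundamentalSequence_has_prop γ <;> rw [e] at hp
  · exact hp.2 hγ
  · exact (hp.2.1 x).2.2 hγ

/-- The package of growth properties of `Ack δ`. -/
def AckGood (δ : ONote) : Prop :=
  Monotone (Ack δ) ∧ Ack δ 0 ≤ 1 ∧ (0 < δ → ∀ y, 1 ≤ y → y + 1 ≤ Ack δ y)

theorem iter_aux {g : ℕ → ℕ} (grow : ∀ y, 1 ≤ y → y + 1 ≤ g y) : ∀ k, k + 1 ≤ g^[k] 1 := by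
  intro k
  induction k with
  | zero => exact le_refl 1
  | succ n ih =>
    rw [Function.iterate_succ_apply']
    calc n + 2 ≤ g^[n] 1 + 1 := Nat.add_le_add_right ih 1
    _ ≤ g (g^[n] 1) := grow _ (le_trans (Nat.le_add_left 1 n) ih)

theorem ack_step (x : ℕ) {β γ : ONote} (hγ : γ.NF) (h : ptStep x β γ)
    (H : ∀ δ, δ < γ → δ.NF → AckGood δ) : Ack β x ≤ Ack γ x := by
  rcases h with e | ⟨f, e, rfl⟩
  · have hp := fundamentalSequence_has_prop γ
    rw [e] at hp
    have hβγ : β < γ := by rw [lt_def, hp.1]; exact Order.lt_succ _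
    have hNFβ : β.NF := hp.2 hγ
    rw [Ack_succ γ e]
    by_cases h0 : β = 0
    · subst h0
      rw [if_pos rfl, Ack_zero' 0 rfl]
      exact Nat.zero_le _
    · rw [if_neg h0]
      obtain ⟨mono, z0, grow⟩ := H β hβγ hNFβ
      have pos : 0 < β := onote_pos_of_ne_zero h0
      cases x with
      | zero => simpa using z0
      | succ n =>
        calc Ack β (n + 1) ≤ Ack β ((Ack β)^[n] 1) := mono (iter_aux (grow pos) n)
        _ = (Ack β)^[n + 1] 1 := (Function.iterate_succ_apply' _ _ _).symm
  · rw [Ack_limit γ e]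

theorem ack_main : ∀ (α : ONote), α.NF → AckGood α
  | α, hNF => by
    rcases e : fundamentalSequence α with (_ | a) | f
    · have hp := fundamentalSequence_has_prop α
      rw [e] at hp
      rw [AckGood, Ack_zero' α e]
      refine ⟨fun u v _ => le_refl 0, Nat.zero_le 1, fun h0 => absurd h0 ?_⟩
      subst hp
      exact lt_irrefl 0
    · have hp := fundamentalSequence_has_prop α
      rw [e] at hp
      have ha : a < α := by rw [lt_def, hp.1]; exact Order.lt_succ _
      have hNFa := hp.2 hNF
      rw [AckGood, Ack_succ α e]
      by_cases h0 : a = 0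
      · rw [if_pos h0]
        exact ⟨fun u v h => by simpa using Nat.mul_le_mul_left 2 h, by simp,
          fun _ y hy => by omega⟩
      · rw [if_neg h0]
        obtain ⟨mono, z0, grow⟩ := ack_main a hNFa
        have pos : 0 < a := onote_pos_of_ne_zero h0
        refine ⟨monotone_nat_of_le_succ fun n => ?_, le_refl 1, fun _ y hy => iter_aux (grow pos) y⟩
        rw [Function.iterate_succ_apply']
        have h1 : 1 ≤ (Ack a)^[n] 1 := le_trans (Nat.le_add_left 1 n) (iter_aux (grow pos) n)
        exact le_trans (Nat.le_succ _) (grow pos _ h1)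
    · have hp := fundamentalSequence_has_prop α
      rw [e] at hp
      have key : ∀ (z : ℕ) {β γ : ONote}, ptLt z β γ → γ < α → γ.NF → Ack β z ≤ Ack γ z := by
        intro z β γ h
        induction h with
        | single h =>
          intro hγα hγ
          refine ack_step z hγ h fun δ hδ hNFδ => ?_
          have hδα : δ < α := lt_trans hδ hγα
          exact ack_main δ hNFδ
        | tail hbc h ih =>
          intro hγα hγ
          have hc_lt := ptStep_lt h
          have hNFc := ptStep_nf h hγ
          refine le_trans (ih (lt_trans hc_lt hγα) hNFc) (ack_step z hγ h fun δ hδ hNFδ => ?_)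
          have hδα : δ < α := lt_trans hδ hγα
          exact ack_main δ hNFδ
      rw [AckGood, Ack_limit α e]
      refine ⟨monotone_nat_of_le_succ fun n => ?_, ?_, ?_⟩
      · have h1 : Ack (f n) n ≤ Ack (f (n + 1)) n :=
          key n (bachmann n α e) ((hp.2.1 (n + 1)).2.1) ((hp.2.1 (n + 1)).2.2 hNF)
        have h2 : f (n + 1) < α := (hp.2.1 (n + 1)).2.1
        exact le_trans h1 ((ack_main (f (n + 1)) ((hp.2.1 (n + 1)).2.2 hNF)).1 (Nat.le_succ n))
      · have h2 : f 0 < α := (hp.2.1 0).2.1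
        exact (ack_main (f 0) ((hp.2.1 0).2.2 hNF)).2.1
      · intro _ y hy
        have h2 : f y < α := (hp.2.1 y).2.1
        have posf : 0 < f y := by
          obtain ⟨k, rfl⟩ := Nat.exists_eq_add_of_le' hy
          refine lt_of_le_of_lt ?_ (hp.2.1 k).1
          rw [le_def]
          exact _root_.zero_le
        exact (ack_main (f y) ((hp.2.1 y).2.2 hNF)).2.2 posf y hy
  termination_by α => α

theorem ptStep_ne_zero {x : ℕ} {u v : ONote} (h : ptStep x u v) : v ≠ 0 := by
  rintro rfl
  rcases h with e | ⟨f, e, _⟩ <;>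
    rw [show fundamentalSequence 0 = Sum.inl none from rfl] at e <;> cases e


/-- The Ackermann hierarchy is pointwise monotone in its ordinal index: for ordinals
`0 < β < ε₀` and `0 < α < ε₀` and all `x ∈ ℕ`, if `β ≺_x α` then `A_α(x) ≥ A_β(x)`. -/
theorem ack_pointwise_mono (α β : ONote) (hNFα : α.NF) (hNFβ : β.NF) (hα : 0 < α)
    (hβ : 0 < β) (x : ℕ) (h : ptLt x β α) :
    Ack β x ≤ Ack α x := by
  induction h with
  | single h => exact ack_step x hNFα h fun δ _ hNFδ => ack_main δ hNFδ
  | @tail b c hbc h ih =>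
    have hNFc := ptStep_nf h hNFα
    have hb0 : b ≠ 0 := by
      rcases hbc with h' | ⟨_, h'⟩ <;> exact ptStep_ne_zero h'
    exact le_trans (ih hNFc (onote_pos_of_ne_zero hb0))
      (ack_step x hNFα h fun δ _ hNFδ => ack_main δ hNFδ)
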